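/- A locally convex space E that is metrizable and is the locally convex inductive limit of an increasing sequence of normed spaces (i.e., a metrizable (DF)-space) is normable. -/

import Mathlib

open TopologicalSpace Filter
open scoped Topology Pointwise NNReal

section AuxLemmas

variable {E : Type*} [AddCommGroup E] [Module ℝ E]

theorem mdf_aux_admissible (N : Seminorm ℝ E) :
    @IsTopologicalAddGroup E (SeminormFamily.moduleFilterBasis
      (fun _ : Fin 1 => N)).topology _ ∧
    @ContinuousSMul ℝ E _ _ (SeminormFamily.moduleFilterBasis
      (fun _ : Fin 1 => N)).topology ∧
    @LocallyConvexSpace ℝ E _ _ _ _ (SeminormFamily.moduleFilterBasis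
      (fun _ : Fin 1 => N)).topology := by
  letI t : TopologicalSpace E :=
    (SeminormFamily.moduleFilterBasis (fun _ : Fin 1 => N)).topology
  haveI hws : WithSeminorms (fun _ : Fin 1 => N) := ⟨rfl⟩
  exact ⟨hws.topologicalAddGroup, hws.continuousSMul, hws.toLocallyConvexSpace⟩

theorem mdf_aux_cont {X : Type*} [NormedAddCommGroup X] [NormedSpace ℝ X]
    (N : Seminorm ℝ E) (f : X →ₗ[ℝ] E) (C : ℝ)
    (h : ∀ x, N (f x) ≤ C * ‖x‖) :
    @Continuous X E _ (SeminormFamily.moduleFilterBasis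
      (fun _ : Fin 1 => N)).topology f := by
  letI t : TopologicalSpace E :=
    (SeminormFamily.moduleFilterBasis (fun _ : Fin 1 => N)).topology
  haveI hws : WithSeminorms (fun _ : Fin 1 => N) := ⟨rfl⟩
  refine Seminorm.cont_normedSpace_to_withSeminorms X hws (f : X →ₗ[ℝ] E) ?_
  intro i
  refine ⟨C.toNNReal, ?_⟩
  rw [Seminorm.le_def]
  intro x
  have : (C.toNNReal • normSeminorm ℝ X) x = max C 0 * ‖x‖ := by
    simp [NNReal.smul_def, Real.coe_toNNReal']
  rw [Seminorm.comp_apply, this]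
  exact (h x).trans (mul_le_mul_of_nonneg_right (le_max_left _ _) (norm_nonneg x))

theorem mdf_aux_ball_mem (N : Seminorm ℝ E) {r : ℝ} (hr : 0 < r) :
    N.ball 0 r ∈ @nhds E (SeminormFamily.moduleFilterBasis
      (fun _ : Fin 1 => N)).topology 0 := by
  letI t : TopologicalSpace E :=
    (SeminormFamily.moduleFilterBasis (fun _ : Fin 1 => N)).topology
  haveI hws : WithSeminorms (fun _ : Fin 1 => N) := ⟨rfl⟩
  exact hws.hasBasis.mem_of_mem
    (SeminormFamily.basisSets_singleton_mem (fun _ : Fin 1 => N) 0 hr)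

end AuxLemmas

/-- a metrizable locally convex space which is the locally convex inductive limit
of an increasing sequence of normed spaces (a metrizable (DF)-space) is normable: its topology
is induced by a single norm. -/
theorem metrizable_DF_is_normable
    {E : Type*} [AddCommGroup E] [Module ℝ E] [tE : TopologicalSpace E]
    [IsTopologicalAddGroup E] [ContinuousSMul ℝ E] [LocallyConvexSpace ℝ E]
    [MetrizableSpace E]
    (X : ℕ → Type*) [∀ r, NormedAddCommGroup (X r)] [∀ r, NormedSpace ℝ (X r)]
    (u : ∀ r, X r →ₗ[ℝ] E) (i : ∀ r, X r →ₗ[ℝ] X (r + 1))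
    (hcomm : ∀ r (x : X r), u (r + 1) (i r x) = u r x)
    (hinj : ∀ r, Function.Injective (u r))
    (hicont : ∀ r, Continuous (i r))
    (hunion : ∀ e : E, ∃ r, ∃ x : X r, u r x = e)
    (hcont : ∀ r, Continuous (u r))
    (hfinest : ∀ t : TopologicalSpace E,
      (@IsTopologicalAddGroup E t _ ∧ @ContinuousSMul ℝ E _ _ t ∧
        @LocallyConvexSpace ℝ E _ _ _ _ t) →
      (∀ r, @Continuous (X r) E _ t (u r)) → tE ≤ t) :
    ∃ N : Seminorm ℝ E, (∀ x : E, N x = 0 → x = 0) ∧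
      WithSeminorms (fun _ : Fin 1 => N) := by
  classical
  -- a countable antitone basis of absolutely convex neighbourhoods of 0
  obtain ⟨U, hU, hUb⟩ :=
    (nhds_hasBasis_absConvex ℝ E).exists_antitone_subbasis
  have hUmem : ∀ n, U n ∈ 𝓝 (0 : E) := fun n => (hU n).1
  have hUbal : ∀ n, Balanced ℝ (U n) := fun n => (hU n).2.1
  have hUconv : ∀ n, Convex ℝ (U n) := fun n => (hU n).2.2
  have hU0 : ∀ n, (0 : E) ∈ U n := fun n => mem_of_mem_nhds (hUmem n)
  have hUanti : Antitone U := hUb.antitone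
  -- continuity of the `u r` in quantitative form
  have small : ∀ r n : ℕ, ∃ δ : ℝ, 0 < δ ∧ ∀ x : X r, ‖x‖ < δ → u r x ∈ U n := by
    intro r n
    have h := (hcont r).tendsto 0
    rw [map_zero] at h
    have h2 : (u r) ⁻¹' (U n) ∈ 𝓝 (0 : X r) := h (hUmem n)
    rcases Metric.mem_nhds_iff.mp h2 with ⟨δ, hδ0, hδ⟩
    exact ⟨δ, hδ0, fun x hx => hδ (mem_ball_zero_iff.mpr hx)⟩
  choose ε hεpos hεU using fun r => small r r
  -- the basic bounded sets and the candidate bounded neighbourhood W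
  set A : ℕ → Set E := fun r => u r '' Metric.ball 0 (ε r) with hAdef
  set S : Set E := ⋃ r, A r with hSdef
  set W : Set E := convexHull ℝ (balancedHull ℝ S) with hWdef
  have hSsub : ∀ r, A r ⊆ S := fun r => Set.subset_iUnion A r
  have hSW : S ⊆ W := (subset_balancedHull ℝ).trans (subset_convexHull ℝ _)
  have hWbal : Balanced ℝ W := (balancedHull.balanced S).convexHull
  have hWconv : Convex ℝ W := convex_convexHull ℝ _
  have h0S : (0 : E) ∈ S := by
    refine Set.mem_iUnion.2 ⟨0, ⟨0, ?_, map_zero (u 0)⟩⟩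
    simpa using hεpos 0
  have h0W : (0 : E) ∈ W := hSW h0S
  have hAU : ∀ r, A r ⊆ U r := by
    rintro r y ⟨x, hx, rfl⟩
    exact hεU r x (mem_ball_zero_iff.mp hx)
  -- W is absorbent
  have habs : Absorbent ℝ W := by
    intro e
    obtain ⟨r, x, rfl⟩ := hunion e
    refine Absorbs.of_norm ⟨(‖x‖ + 1) / ε r, fun c hc => ?_⟩
    have hc0 : 0 < ‖c‖ := lt_of_lt_of_le (div_pos (by positivity) (hεpos r)) hc
    have hcne : c ≠ 0 := by simpa using hc0.ne'
    rw [Set.singleton_subset_iff, Set.mem_smul_set_iff_inv_smul_mem₀ hcne,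
      ← map_smul]
    refine hSW (hSsub r ⟨c⁻¹ • x, mem_ball_zero_iff.mpr ?_, rfl⟩)
    rw [norm_smul, norm_inv]
    have hεr := hεpos r
    have h1 : ‖x‖ + 1 ≤ ‖c‖ * ε r := by
      rw [div_le_iff₀ hεr] at hc
      linarith
    rw [inv_mul_lt_iff₀ hc0]
    nlinarith [norm_nonneg x]
  -- the candidate seminorm
  set N : Seminorm ℝ E := gaugeSeminorm hWbal hWconv habs with hNdef
  have hNapp : ∀ x : E, N x = gauge W x := fun x => gaugeSeminorm_toFun _ _ _ x
  -- the quantitative bound for N ∘ u r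
  have hNle : ∀ (r : ℕ) (x : X r), N (u r x) ≤ (ε r)⁻¹ * ‖x‖ := by
    intro r x
    refine le_of_forall_gt_imp_ge_of_dense fun a ha => ?_
    have ha0 : 0 < a := lt_of_le_of_lt (mul_nonneg (inv_nonneg.mpr (hεpos r).le) (norm_nonneg x)) ha
    rw [hNapp]
    refine gauge_le_of_mem ha0.le ?_
    rw [Set.mem_smul_set_iff_inv_smul_mem₀ ha0.ne', ← map_smul]
    refine hSW (hSsub r ⟨a⁻¹ • x, mem_ball_zero_iff.mpr ?_, rfl⟩)
    rw [norm_smul, norm_inv, Real.norm_eq_abs, abs_of_pos ha0]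
    have hεr := hεpos r
    rw [inv_mul_lt_iff₀ ha0]
    calc ‖x‖ = ε r * ((ε r)⁻¹ * ‖x‖) := by field_simp
    _ < ε r * a := by exact mul_lt_mul_of_pos_left ha hεr
    _ = a * ε r := mul_comm _ _
  -- W is a neighbourhood of 0 : use the finest-topology hypothesis
  have hWnhd : W ∈ 𝓝 (0 : E) := by
    set t : TopologicalSpace E :=
      (SeminormFamily.moduleFilterBasis (fun _ : Fin 1 => N)).topology with htdef
    have hle : tE ≤ t :=
      hfinest t (mdf_aux_admissible N)
        (fun r => mdf_aux_cont N (u r) (ε r)⁻¹ (hNle r))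
    have hWt : W ∈ @nhds E t 0 := by
      refine Filter.mem_of_superset (mdf_aux_ball_mem N one_pos) ?_
      rw [Seminorm.ball_zero_eq]
      intro y hy
      rw [Set.mem_setOf_eq, hNapp] at hy
      exact gauge_lt_one_subset_self hWconv h0W habs hy
    exact nhds_mono hle hWt
  -- each A r is absorbed by each U n
  have hsmall : ∀ r n : ℕ, ∃ c : ℝ, 0 < c ∧ A r ⊆ c • U n := by
    intro r n
    obtain ⟨δ, hδ0, hδ⟩ := small r n
    set c : ℝ := 2 * ε r / δ with hcdef
    have hc0 : 0 < c := div_pos (by linarith [hεpos r]) hδ0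
    refine ⟨c, hc0, ?_⟩
    rintro y ⟨x, hx, rfl⟩
    rw [Set.mem_smul_set_iff_inv_smul_mem₀ hc0.ne', ← map_smul]
    refine hδ _ ?_
    rw [norm_smul, norm_inv, Real.norm_eq_abs, abs_of_pos hc0]
    have hx' : ‖x‖ < ε r := mem_ball_zero_iff.mp hx
    have hεr := hεpos r
    rw [inv_mul_lt_iff₀ hc0, hcdef]
    calc ‖x‖ < 2 * ε r := by linarith
    _ = δ * (2 * ε r / δ) := by field_simp
    _ = 2 * ε r / δ * δ := mul_comm _ _
  -- W is bounded : it is absorbed by every U n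
  have hbound : ∀ n, ∃ c : ℝ, 1 ≤ c ∧ W ⊆ c • U n := by
    intro n
    obtain ⟨Vh, hVh, hVhsub⟩ := exists_nhds_zero_half (hUmem n)
    obtain ⟨m₀, hm₀⟩ := hUb.mem_iff.mp hVh
    set m : ℕ := m₀ + 1 with hmdef
    have hUmVh : U m ⊆ Vh := (hUanti (Nat.le_succ m₀)).trans hm₀
    choose cA hcA0 hcA using fun r => hsmall r m
    set c : ℝ := 1 + ∑ r ∈ Finset.range m, cA r with hcdef
    have hsum0 : (0:ℝ) ≤ ∑ r ∈ Finset.range m, cA r :=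
      Finset.sum_nonneg fun r _ => (hcA0 r).le
    have hc1 : (1 : ℝ) ≤ c := by rw [hcdef]; linarith
    have hc0 : (0 : ℝ) < c := lt_of_lt_of_le one_pos hc1
    have hcr : ∀ r, r < m → cA r ≤ c := by
      intro r hr
      have := Finset.single_le_sum (f := cA) (fun s _ => (hcA0 s).le)
        (Finset.mem_range.mpr hr)
      rw [hcdef]; linarith
    -- the balanced hull of S is inside c • U m + U m
    have hbHS : balancedHull ℝ S ⊆ c • U m + U m := by
      intro y hy
      obtain ⟨a, ha, hy'⟩ := mem_balancedHull_iff.mp hy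
      obtain ⟨z, hzS, rfl⟩ := hy'
      obtain ⟨r, hzr⟩ := Set.mem_iUnion.mp hzS
      rcases lt_or_ge r m with hrm | hrm
      · -- r < m : z lands in cA r • U m ⊆ c • U m
        have hz1 : z ∈ cA r • U m := hcA r hzr
        obtain ⟨w, hw, rfl⟩ := hz1
        have haw : a • w ∈ U m := hUbal m a ha (Set.smul_mem_smul_set hw)
        have h1 : a • cA r • w = cA r • (a • w) := smul_comm a (cA r) w
        have h2 : cA r • (a • w) ∈ cA r • U m := Set.smul_mem_smul_set haw
        have h3 : cA r • (a • w) ∈ c • U m := by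
          refine (hUbal m).smul_mono ?_ h2
          rw [Real.norm_eq_abs, Real.norm_eq_abs, abs_of_pos (hcA0 r),
            abs_of_pos hc0]
          exact hcr r hrm
        have h4 : (0 : E) ∈ U m := hU0 m
        have := Set.add_mem_add (h1 ▸ h3) h4
        simpa using this
      · -- m ≤ r : z ∈ U r ⊆ U m
        have hz1 : z ∈ U m := hUanti hrm (hAU r hzr)
        have haz : a • z ∈ U m := hUbal m a ha (Set.smul_mem_smul_set hz1)
        have h0c : (0 : E) ∈ c • U m := by
          have := Set.smul_mem_smul_set (a := c) (hU0 m)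
          simpa using this
        have := Set.add_mem_add h0c haz
        simpa using this
    have hWsub : W ⊆ c • U m + U m :=
      convexHull_min hbHS (((hUconv m).smul c).add (hUconv m))
    refine ⟨c, hc1, hWsub.trans ?_⟩
    -- c • U m + U m ⊆ c • U n
    intro y hy
    obtain ⟨y1, hy1, y2, hy2, rfl⟩ := Set.mem_add.mp hy
    have hy2' : y2 ∈ c • U m := (hUbal m).subset_smul
      (by rw [Real.norm_eq_abs, abs_of_pos hc0]; exact hc1) hy2
    obtain ⟨v, hv, rfl⟩ := hy1
    obtain ⟨w, hw, rfl⟩ := hy2'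
    rw [← smul_add]
    exact Set.smul_mem_smul_set (hVhsub v (hUmVh hv) w (hUmVh hw))
  -- key : every neighbourhood of 0 contains a gauge ball
  have key : ∀ V ∈ 𝓝 (0 : E), ∃ r : ℝ, 0 < r ∧ {x : E | N x < r} ⊆ V := by
    intro V hV
    obtain ⟨n, hn⟩ := hUb.mem_iff.mp hV
    obtain ⟨c, hc1, hWc⟩ := hbound n
    have hc0 : (0 : ℝ) < c := lt_of_lt_of_le one_pos hc1
    refine ⟨c⁻¹, by positivity, fun x hx => ?_⟩
    rw [Set.mem_setOf_eq] at hx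
    have hcx : N (c • x) < 1 := by
      rw [map_smul_eq_mul, Real.norm_eq_abs, abs_of_pos hc0]
      calc c * N x < c * c⁻¹ := mul_lt_mul_of_pos_left hx hc0
      _ = 1 := mul_inv_cancel₀ hc0.ne'
    have hcxW : c • x ∈ W := by
      rw [hNapp] at hcx
      exact gauge_lt_one_subset_self hWconv h0W habs hcx
    have : c • x ∈ c • U n := hWc hcxW
    obtain ⟨w, hw, hww⟩ := this
    have : x = w := by
      have := congrArg (fun z => c⁻¹ • z) hww
      simpa [smul_smul, inv_mul_cancel₀ hc0.ne'] using this.symm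
    exact hn (this ▸ hw)
  -- the two inequalities between the filters
  have hle1 : Filter.comap N (𝓝 (0 : ℝ)) ≤ 𝓝 (0 : E) := by
    intro V hV
    obtain ⟨r, hr, hsub⟩ := key V hV
    refine Filter.mem_comap.mpr ⟨Metric.ball 0 r, Metric.ball_mem_nhds 0 hr, ?_⟩
    intro x hx
    refine hsub ?_
    have : |N x| < r := by
      simpa [Real.dist_eq] using hx
    exact lt_of_le_of_lt (le_abs_self _) this
  have hle2 : 𝓝 (0 : E) ≤ Filter.comap N (𝓝 (0 : ℝ)) := by
    rw [← Filter.tendsto_iff_comap]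
    rw [Metric.tendsto_nhds]
    intro δ hδ
    have hmem : (δ / 2) • W ∈ 𝓝 (0 : E) :=
      (set_smul_mem_nhds_zero_iff (by positivity : (δ/2 : ℝ) ≠ 0)).mpr hWnhd
    refine Filter.eventually_of_mem hmem ?_
    rintro y ⟨w, hw, rfl⟩
    have h1 : N ((δ/2) • w) ≤ δ/2 := by
      rw [map_smul_eq_mul, Real.norm_eq_abs, abs_of_pos (by positivity : (0:ℝ) < δ/2)]
      have : N w ≤ 1 := by rw [hNapp]; exact gauge_le_one_of_mem hw
      nlinarith
    have h0 : 0 ≤ N ((δ/2) • w) := apply_nonneg N _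
    rw [Real.dist_eq, sub_zero, abs_of_nonneg h0]
    linarith
  have hnhds : 𝓝 (0 : E) = Filter.comap N (𝓝 (0 : ℝ)) := le_antisymm hle2 hle1
  -- conclusion
  refine ⟨N, ?_, ?_⟩
  · intro x hx
    by_contra hne
    have hV : ({x}ᶜ : Set E) ∈ 𝓝 (0 : E) :=
      (isOpen_compl_singleton).mem_nhds (by simp [Ne.symm hne])
    obtain ⟨r, hr, hsub⟩ := key _ hV
    exact (hsub (show x ∈ {y : E | N y < r} by rw [Set.mem_setOf_eq, hx]; exact hr)) rfl
  · rw [SeminormFamily.withSeminorms_iff_nhds_eq_iInf]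
    simpa [iInf_const] using hnhds
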